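/- Let L be a complete lattice with its Scott topology and the cone structure where x+y = x∨y and r·x = x if r>0, ⊥ if r=0. Then the lower semicontinuous linear maps Λ : L → [0,∞] are exactly the maps of the form ∞·χ_{L∖↓x₀} for points x₀ ∈ L (i.e., Λ(x)=0 if x ≤ x₀ and Λ(x)=∞ otherwise). -/

import Mathlib

open Set ENNReal NNReal TopologicalSpace MeasureTheory
open scoped Classical

/-- A continuous valuation on a topological space `X`: a strict, monotone, modular,
Scott-continuous map from the open sets of `X` to `ℝ≥0∞`. -/
structure ContValuation (X : Type*) [TopologicalSpace X] where
  toFun : Opens X → ℝ≥0∞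
  strict' : toFun ⊥ = 0
  mono' : ∀ U V : Opens X, U ≤ V → toFun U ≤ toFun V
  modular' : ∀ U V : Opens X, toFun U + toFun V = toFun (U ⊔ V) + toFun (U ⊓ V)
  scott' : ∀ S : Set (Opens X), S.Nonempty → DirectedOn (· ≤ ·) S →
    toFun (sSup S) = ⨆ U ∈ S, toFun U

/-- The stochastic order on continuous valuations: pointwise order on open sets. -/
def stochLE {X : Type*} [TopologicalSpace X] (μ ν : ContValuation X) : Prop :=
  ∀ U : Opens X, μ.toFun U ≤ ν.toFun U

/-- Linearity of a functional `Λ : L → [0,∞]` with respect to the join-cone structure on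
a complete lattice `L` (`x + y = x ⊔ y`, `r · x = x` if `r > 0` and `⊥` if `r = 0`):
`Λ(r·x + s·y) = r·Λ(x) + s·Λ(y)`. -/
def JoinConeLinear {L : Type*} [CompleteLattice L] (Λ : L → ℝ≥0∞) : Prop :=
  ∀ (r s : ℝ≥0) (x y : L),
    Λ ((if r = 0 then ⊥ else x) ⊔ (if s = 0 then ⊥ else y)) =
      (r : ℝ≥0∞) * Λ x + (s : ℝ≥0∞) * Λ y

/-- Let `L` be a complete lattice with its Scott topology and the join-cone structure.
The lower semicontinuous linear maps `Λ : L → [0,∞]` are exactly the maps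
`∞·χ_{L∖↓x₀}` for `x₀ ∈ L`, i.e. `Λ(x) = 0` if `x ≤ x₀` and `Λ(x) = ∞` otherwise. -/
theorem joinCone_linear_functionals
    (L : Type*) [CompleteLattice L] [TopologicalSpace L] [Topology.IsScott L Set.univ]
    (Λ : L → ℝ≥0∞) :
    (LowerSemicontinuous Λ ∧ JoinConeLinear Λ) ↔
      ∃ x₀ : L, ∀ x : L, Λ x = if x ≤ x₀ then 0 else ∞ := by
  constructor
  · rintro ⟨hls, hlin⟩
    -- basic consequences of linearity
    have hadd : ∀ x y : L, Λ (x ⊔ y) = Λ x + Λ y := by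
      intro x y
      have := hlin 1 1 x y
      simpa using this
    have hbot : Λ (⊥ : L) = 0 := by
      have := hlin 0 0 ⊥ ⊥
      simpa using this
    have htwo : ∀ x : L, Λ x = 0 ∨ Λ x = ∞ := by
      intro x
      rcases eq_or_ne (Λ x) ∞ with h | h
      · exact Or.inr h
      · have hx : Λ x + Λ x = Λ x + 0 := by
          rw [add_zero, ← hadd, sup_idem]
        exact Or.inl ((ENNReal.add_right_inj h).mp hx)
    have hmono : ∀ x y : L, x ≤ y → Λ y = 0 → Λ x = 0 := by
      intro x y hxy hy
      have : Λ y = Λ y + Λ x := by rw [← hadd, sup_eq_left.mpr hxy]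
      rw [hy] at this
      simpa using this.symm
    set Z : Set L := {x | Λ x = 0} with hZ
    have hbotZ : (⊥ : L) ∈ Z := hbot
    have hdir : DirectedOn (· ≤ ·) Z := by
      intro x hx y hy
      refine ⟨x ⊔ y, ?_, le_sup_left, le_sup_right⟩
      show Λ (x ⊔ y) = 0
      rw [hadd, hx, hy, add_zero]
    refine ⟨sSup Z, fun x => ?_⟩
    have hU : IsOpen (Λ ⁻¹' Set.Ioi 0) := hls.isOpen_preimage 0
    have hinacc : DirSupInaccOn Set.univ (Λ ⁻¹' Set.Ioi 0) :=
      ((Topology.IsScott.isOpen_iff_isUpperSet_and_dirSupInaccOn).mp hU).2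
    have hx₀ : Λ (sSup Z) = 0 := by
      by_contra h
      have hpos : sSup Z ∈ Λ ⁻¹' Set.Ioi 0 := by
        simpa [Set.mem_preimage, pos_iff_ne_zero] using h
      obtain ⟨z, hzZ, hzU⟩ := hinacc (Set.mem_univ Z) ⟨⊥, hbotZ⟩ hdir
        (isLUB_sSup Z) hpos
      have : Λ z = 0 := hzZ
      simp [Set.mem_preimage, this] at hzU
    by_cases hx : x ≤ sSup Z
    · rw [if_pos hx]
      exact hmono x (sSup Z) hx hx₀
    · rw [if_neg hx]
      have hxZ : x ∉ Z := fun h => hx (le_sSup h)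
      rcases htwo x with h | h
      · exact absurd h hxZ
      · exact h
  · rintro ⟨x₀, h⟩
    have hopen : IsOpen ((Set.Iic x₀)ᶜ) :=
      isOpen_compl_iff.2 isClosed_Iic
    constructor
    · rw [lowerSemicontinuous_iff_isOpen_preimage]
      intro t
      have : Λ ⁻¹' Set.Ioi t = if t = ∞ then ∅ else (Set.Iic x₀)ᶜ := by
        ext x
        by_cases hx : x ≤ x₀ <;> by_cases ht : t = ∞ <;>
          simp [h x, hx, ht, lt_top_iff_ne_top]
      rw [this]
      split_ifs
      · exact isOpen_empty
      · exact hopen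
    · have hsup : ∀ x y : L, Λ (x ⊔ y) = Λ x + Λ y := by
        intro x y
        by_cases hx : x ≤ x₀ <;> by_cases hy : y ≤ x₀ <;>
          simp [h, sup_le_iff, hx, hy]
      have hsc : ∀ (r : ℝ≥0) (x : L), Λ (if r = 0 then ⊥ else x) = (r : ℝ≥0∞) * Λ x := by
        intro r x
        by_cases hr : r = 0
        · simp [hr, h, bot_le]
        · rw [if_neg hr]
          rcases eq_or_ne (Λ x) 0 with h0 | h0
          · simp [h0]
          · have hxx : Λ x = ∞ := by
              rcases (h x).symm ▸ (rfl : Λ x = Λ x) with _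
              by_cases hx : x ≤ x₀
              · exact absurd (h x ▸ if_pos hx) h0
              · rw [h x, if_neg hx]
            rw [hxx, ENNReal.mul_top (by exact_mod_cast hr)]
      intro r s x y
      rw [hsup, hsc, hsc]
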